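/- arXiv:1908.03969 — 5 statements merged into one kernel-verified Lean document; each statement's English description precedes it below -/
import Mathlib

section
/- Let h : ℕ → ℂ be a multiplicative arithmetic function (h(1) = 1 and h(mn) = h(m)h(n) whenever gcd(m,n) = 1) satisfying, for all primes p and all positive integers k: (1) there is a real M ≥ 1 with |h(p^k)| ≤ M; (2) there is a positive integer K with h(p^k) = 0 for all k > K; and (3) h(p) = 0. Then for every real σ > (K−1)/K, the series ∑_{n≥1} |h(n)|/n^σ converges. -/
open Finset

/-- auxiliary exponent splitting: `e = 2 * stmt8Q e + 3 * (e % 2)` whenever `2 ≤ e`. -/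
def stmt8Q (e : ℕ) : ℕ := (e - 3 * (e % 2)) / 2

/-- the "square part" in the decomposition of a powerful number as `a ^ 2 * b ^ 3`. -/
def stmt8A (m : ℕ) : ℕ := ∏ p ∈ m.primeFactors, p ^ stmt8Q (m.factorization p)

/-- the "cube part" in the decomposition of a powerful number as `a ^ 2 * b ^ 3`. -/
def stmt8B (m : ℕ) : ℕ := ∏ p ∈ m.primeFactors, p ^ (m.factorization p % 2)

/-- Let `h : ℕ → ℂ` be multiplicative with `|h(p^k)| ≤ M` (some `M ≥ 1`),
`h(p^k) = 0` for `k > K` (some integer `K > 0`), and `h(p) = 0`, for all primes `p` and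
positive integers `k`. Then `∑_{n ≥ 1} |h(n)|/n^σ` converges for every `σ > (K−1)/K`. -/
theorem stmt8 (h : ℕ → ℂ) (h1 : h 1 = 1)
    (hmul : ∀ m n : ℕ, Nat.Coprime m n → h (m * n) = h m * h n)
    (M : ℝ) (hM : 1 ≤ M)
    (hbound : ∀ p k : ℕ, p.Prime → 0 < k → ‖h (p ^ k)‖ ≤ M)
    (K : ℕ) (hK : 0 < K)
    (hvanish : ∀ p k : ℕ, p.Prime → 0 < k → K < k → h (p ^ k) = 0)
    (hprime : ∀ p : ℕ, p.Prime → h p = 0)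
    (σ : ℝ) (hσ : ((K : ℝ) - 1) / K < σ) :
    Summable (fun n : ℕ => ‖h (n + 1)‖ / ((n : ℝ) + 1) ^ σ) := by
  -- support lemma: if `h m ≠ 0` and `m ≠ 0`, all prime exponents of `m` lie in `[2, K]`
  have hsupp : ∀ m : ℕ, m ≠ 0 → h m ≠ 0 → ∀ p ∈ m.primeFactors,
      2 ≤ m.factorization p ∧ m.factorization p ≤ K := by
    intro m hm hhm p hp
    have heq := Nat.multiplicative_factorization h hmul h1 hm
    have hpp : p.Prime := Nat.prime_of_mem_primeFactors hp
    have hdvd : p ∣ m := Nat.dvd_of_mem_primeFactors hp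
    have hepos : 0 < m.factorization p := hpp.factorization_pos_of_dvd hm hdvd
    have hne : h (p ^ m.factorization p) ≠ 0 := by
      intro h0
      apply hhm
      rw [heq]
      exact Finset.prod_eq_zero (by rwa [Nat.support_factorization]) h0
    constructor
    · rcases Nat.lt_or_ge (m.factorization p) 2 with h2 | h2
      · exfalso
        have he1 : m.factorization p = 1 := by omega
        apply hne
        rw [he1, pow_one]
        exact hprime p hpp
      · exact h2
    · by_contra hgt
      push_neg at hgt
      exact hne (hvanish p _ hpp hepos hgt)
  by_cases hK1 : K = 1
  · -- trivial case: `h` vanishes on all `n ≥ 2`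
    apply summable_of_ne_finset_zero (s := {0})
    intro n hn
    have hn0 : n ≠ 0 := by simpa using hn
    have h2 : 2 ≤ n + 1 := by omega
    obtain ⟨p, hpp, hdvd⟩ := Nat.exists_prime_and_dvd (by omega : n + 1 ≠ 1)
    have hz : h (n + 1) = 0 := by
      by_contra hne
      have := hsupp (n + 1) (by omega) hne p
        (Nat.mem_primeFactors.mpr ⟨hpp, hdvd, by omega⟩)
      omega
    simp [hz]
  · -- main case: `K ≥ 2`, so `σ > 1/2`
    have hK2 : 2 ≤ K := by omega
    have hKR : (2 : ℝ) ≤ K := by exact_mod_cast hK2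
    have hσhalf : (1 : ℝ) / 2 < σ := by
      refine lt_of_le_of_lt ?_ hσ
      rw [div_le_div_iff₀ (by norm_num) (by linarith)]
      linarith
    set ε : ℝ := (σ - 1 / 2) / 2 with hεdef
    have hε0 : 0 < ε := by simp only [hεdef]; linarith
    set s : ℝ := σ - ε with hsdef
    have hs : 1 / 2 < s := by simp only [hsdef, hεdef]; linarith
    -- choose N with M ≤ p ^ ε for p ≥ N
    obtain ⟨N, hN⟩ : ∃ N : ℕ, ∀ p ≥ N, M ≤ (p : ℝ) ^ ε := by
      have ht : Filter.Tendsto (fun n : ℕ => (n : ℝ) ^ ε) Filter.atTop Filter.atTop :=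
        (tendsto_rpow_atTop hε0).comp tendsto_natCast_atTop_atTop
      exact Filter.eventually_atTop.mp (ht.eventually_ge_atTop M)
    set C : ℝ := M ^ N with hCdef
    have hC1 : 1 ≤ C := one_le_pow₀ hM
    have hM0 : 0 ≤ M := by linarith
    -- the `ε`-bound: `M ^ ω(m) ≤ C * m ^ ε`
    have hωbound : ∀ m : ℕ, m ≠ 0 → M ^ m.primeFactors.card ≤ C * (m : ℝ) ^ ε := by
      intro m hm
      have h1' : M ^ m.primeFactors.card = ∏ _p ∈ m.primeFactors, M := by
        rw [Finset.prod_const]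
      rw [h1']
      have hsplit := Finset.prod_filter_mul_prod_filter_not m.primeFactors
        (fun p => p < N) (fun _ => M)
      rw [← hsplit]
      have hsmall : (∏ _p ∈ m.primeFactors.filter (fun p => p < N), M) ≤ C := by
        rw [Finset.prod_const, hCdef]
        apply pow_le_pow_right₀ hM
        calc (m.primeFactors.filter (fun p => p < N)).card
            ≤ (Finset.range N).card := Finset.card_le_card (by
              intro x hx
              simp only [Finset.mem_filter] at hx
              simpa using hx.2)
          _ = N := Finset.card_range N
      have hdvd2 : (∏ p ∈ m.primeFactors.filter (fun p => ¬ p < N), p) ∣ m :=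
        dvd_trans (Finset.prod_dvd_prod_of_subset _ _ _ (Finset.filter_subset _ _))
          (Nat.prod_primeFactors_dvd m)
      have hbig : (∏ _p ∈ m.primeFactors.filter (fun p => ¬ p < N), M)
          ≤ (m : ℝ) ^ ε := by
        calc (∏ _p ∈ m.primeFactors.filter (fun p => ¬ p < N), M)
            ≤ ∏ p ∈ m.primeFactors.filter (fun p => ¬ p < N), (p : ℝ) ^ ε := by
              apply Finset.prod_le_prod (fun _ _ => hM0)
              intro p hp
              simp only [Finset.mem_filter, not_lt] at hp
              exact hN p hp.2
          _ = ((∏ p ∈ m.primeFactors.filter (fun p => ¬ p < N), (p : ℝ))) ^ ε := by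
              rw [Real.finset_prod_rpow _ _ (fun p _ => by positivity)]
          _ ≤ (m : ℝ) ^ ε := by
              apply Real.rpow_le_rpow (by positivity) _ hε0.le
              rw [← Nat.cast_prod]
              exact_mod_cast Nat.le_of_dvd (Nat.pos_of_ne_zero hm) hdvd2
      exact mul_le_mul hsmall hbig (Finset.prod_nonneg fun _ _ => hM0) (by linarith)
    -- the bound `|h m| ≤ M ^ ω(m)`
    have habs : ∀ m : ℕ, m ≠ 0 → ‖h m‖ ≤ M ^ m.primeFactors.card := by
      intro m hm
      rw [Nat.multiplicative_factorization h hmul h1 hm]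
      rw [Finsupp.prod]
      rw [norm_prod]
      rw [Nat.support_factorization, ← Finset.prod_const]
      apply Finset.prod_le_prod (fun _ _ => norm_nonneg _)
      intro p hp
      exact hbound p _ (Nat.prime_of_mem_primeFactors hp)
        ((Nat.prime_of_mem_primeFactors hp).factorization_pos_of_dvd hm
          (Nat.dvd_of_mem_primeFactors hp))
    -- the decomposition `m = stmt8A m ^ 2 * stmt8B m ^ 3`
    have hABpos : ∀ m : ℕ, 0 < stmt8A m ∧ 0 < stmt8B m := by
      intro m
      constructor <;>
      · apply Finset.prod_pos
        intro p hp
        exact pow_pos (Nat.prime_of_mem_primeFactors hp).pos _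
    have hAB : ∀ m : ℕ, m ≠ 0 → (∀ p ∈ m.primeFactors, 2 ≤ m.factorization p) →
        stmt8A m ^ 2 * stmt8B m ^ 3 = m := by
      intro m hm hs2
      rw [stmt8A, stmt8B]
      rw [← Finset.prod_pow, ← Finset.prod_pow, ← Finset.prod_mul_distrib]
      have : ∀ p ∈ m.primeFactors,
          (p ^ stmt8Q (m.factorization p)) ^ 2 * (p ^ (m.factorization p % 2)) ^ 3
            = p ^ m.factorization p := by
        intro p hp
        rw [← pow_mul, ← pow_mul, ← pow_add]
        congr 1
        have := hs2 p hp
        simp only [stmt8Q]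
        omega
      rw [Finset.prod_congr rfl this]
      have := Nat.factorization_prod_pow_eq_self hm
      rwa [Finsupp.prod, Nat.support_factorization] at this
    -- the majorant on pairs
    set F : ℕ × ℕ → ℝ := fun z => C * ((z.1 : ℝ) ^ (-(2 * s)) * (z.2 : ℝ) ^ (-(3 * s)))
      with hFdef
    have hFnonneg : ∀ z, 0 ≤ F z := by
      intro z
      apply mul_nonneg (by linarith)
      exact mul_nonneg (Real.rpow_nonneg (Nat.cast_nonneg _) _)
        (Real.rpow_nonneg (Nat.cast_nonneg _) _)
    have hFsummable : Summable F := by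
      apply Summable.mul_left
      exact Summable.mul_of_nonneg (f := fun x : ℕ => (x:ℝ) ^ (-(2 * s)))
        (g := fun y : ℕ => (y:ℝ) ^ (-(3 * s)))
        (Real.summable_nat_rpow.mpr (by linarith))
        (Real.summable_nat_rpow.mpr (by linarith))
        (fun x => Real.rpow_nonneg (Nat.cast_nonneg _) _)
        (fun x => Real.rpow_nonneg (Nat.cast_nonneg _) _)
    -- the function to sum
    set g : ℕ → ℝ := fun m => if m = 0 then 0 else ‖h m‖ / (m : ℝ) ^ σ
      with hgdef
    have hgnonneg : ∀ m, 0 ≤ g m := by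
      intro m
      rw [hgdef]
      dsimp only
      split
      · exact le_rfl
      · positivity
    -- pointwise bound on the support
    have hpoint : ∀ m : ℕ, g m ≠ 0 → g m ≤ F (stmt8A m, stmt8B m) := by
      intro m hgm
      have hm0 : m ≠ 0 := by
        intro hc; rw [hgdef] at hgm; simp [hc] at hgm
      have hhm : h m ≠ 0 := by
        intro hc; rw [hgdef] at hgm; simp [hm0, hc] at hgm
      have hdec := hAB m hm0 (fun p hp => (hsupp m hm0 hhm p hp).1)
      have hmpos : (0:ℝ) < (m:ℝ) := by
        exact_mod_cast Nat.pos_of_ne_zero hm0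
      have hstep1 : g m ≤ C * (m:ℝ) ^ (-s) := by
        rw [hgdef]
        simp only [hm0, if_false]
        have hnum : ‖h m‖ ≤ C * (m:ℝ) ^ ε :=
          le_trans (habs m hm0) (hωbound m hm0)
        calc ‖h m‖ / (m:ℝ) ^ σ
            ≤ (C * (m:ℝ) ^ ε) / (m:ℝ) ^ σ := by
              gcongr
          _ = C * ((m:ℝ) ^ ε / (m:ℝ) ^ σ) := by ring
          _ = C * (m:ℝ) ^ (-s) := by
              rw [← Real.rpow_sub hmpos]
              congr 1
              rw [hsdef]
              ring
      have hcast : ((stmt8A m : ℝ)) ^ 2 * ((stmt8B m : ℝ)) ^ 3 = (m:ℝ) := by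
        exact_mod_cast hdec
      have hstep2 : (m:ℝ) ^ (-s)
          = (stmt8A m : ℝ) ^ (-(2 * s)) * (stmt8B m : ℝ) ^ (-(3 * s)) := by
        rw [← hcast, Real.mul_rpow (by positivity) (by positivity),
          ← Real.rpow_natCast (stmt8A m : ℝ) 2, ← Real.rpow_natCast (stmt8B m : ℝ) 3,
          ← Real.rpow_mul (Nat.cast_nonneg _), ← Real.rpow_mul (Nat.cast_nonneg _)]
        norm_num
      calc g m ≤ C * (m:ℝ) ^ (-s) := hstep1
        _ = F (stmt8A m, stmt8B m) := by
            rw [hFdef]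
            simp only
            rw [hstep2]
    -- summability of `g`
    have hkey : Summable g := by
      classical
      apply summable_of_sum_range_le (c := ∑' z, F z) hgnonneg
      intro n
      calc ∑ i ∈ Finset.range n, g i
          = ∑ i ∈ (Finset.range n).filter (fun i => g i ≠ 0), g i :=
            (Finset.sum_filter_ne_zero _).symm
        _ ≤ ∑ i ∈ (Finset.range n).filter (fun i => g i ≠ 0), F (stmt8A i, stmt8B i) := by
            apply Finset.sum_le_sum
            intro i hi
            exact hpoint i (Finset.mem_filter.mp hi).2
        _ = ∑ z ∈ ((Finset.range n).filter (fun i => g i ≠ 0)).image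
              (fun i => (stmt8A i, stmt8B i)), F z := by
            rw [Finset.sum_image]
            intro x hx y hy hxy
            have hgx : g x ≠ 0 := (Finset.mem_filter.mp hx).2
            have hgy : g y ≠ 0 := (Finset.mem_filter.mp hy).2
            have hx0 : x ≠ 0 := by
              intro hc; rw [hgdef] at hgx; simp [hc] at hgx
            have hhx : h x ≠ 0 := by
              intro hc; rw [hgdef] at hgx; simp [hx0, hc] at hgx
            have hy0 : y ≠ 0 := by
              intro hc; rw [hgdef] at hgy; simp [hc] at hgy
            have hhy : h y ≠ 0 := by
              intro hc; rw [hgdef] at hgy; simp [hy0, hc] at hgy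
            have hdx := hAB x hx0 (fun p hp => (hsupp x hx0 hhx p hp).1)
            have hdy := hAB y hy0 (fun p hp => (hsupp y hy0 hhy p hp).1)
            have h1' : stmt8A x = stmt8A y := (Prod.mk.injEq _ _ _ _ ▸ hxy).1
            have h2' : stmt8B x = stmt8B y := (Prod.mk.injEq _ _ _ _ ▸ hxy).2
            rw [← hdx, ← hdy, h1', h2']
        _ ≤ ∑' z, F z := Summable.sum_le_tsum _ (fun z _ => hFnonneg z) hFsummable
    have hshift : Summable (fun n : ℕ => g (n + 1)) := (summable_nat_add_iff 1).mpr hkey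
    have heqfun : (fun n : ℕ => ‖h (n + 1)‖ / ((n : ℝ) + 1) ^ σ)
        = fun n : ℕ => g (n + 1) := by
      funext n
      rw [hgdef]
      simp only [Nat.succ_ne_zero, if_false]
      push_cast
      ring_nf
    rw [heqfun]
    exact hshift
end

section
/- Suppose 0 < x₁ < y₁ < 1, 0 < x₂ < y₂ < 1 are real numbers, g is a 3×3 integer matrix with determinant ±1, and λ > 0 is a real number such that g · G_oI(x₁, y₁) · gᵀ = λ · G_oI(x₂, y₂) (matrix product over ℝ). Then x₁ = x₂, y₁ = y₂, and λ = 1. -/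
open Matrix

/-- The Gram matrix `G_oI(x, y)` of a body-centered orthorhombic lattice. -/
noncomputable def GoI (x y : ℝ) : Matrix (Fin 3) (Fin 3) ℝ :=
  !![(x ^ 2 + y ^ 2 + 1) / 4, (-x ^ 2 + y ^ 2 - 1) / 4, (x ^ 2 - y ^ 2 - 1) / 4;
     (-x ^ 2 + y ^ 2 - 1) / 4, (x ^ 2 + y ^ 2 + 1) / 4, (-x ^ 2 - y ^ 2 + 1) / 4;
     (x ^ 2 - y ^ 2 - 1) / 4, (-x ^ 2 - y ^ 2 + 1) / 4, (x ^ 2 + y ^ 2 + 1) / 4]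

/-- The bilinear form attached to `GoI`, in "BCC coordinates". -/
noncomputable def Bf (x y : ℝ) (u v : Fin 3 → ℤ) : ℝ :=
  (((u 0 - u 1 + u 2) * (v 0 - v 1 + v 2) : ℤ) * x ^ 2
   + ((u 0 + u 1 - u 2) * (v 0 + v 1 - v 2) : ℤ) * y ^ 2
   + ((u 0 - u 1 - u 2) * (v 0 - v 1 - v 2) : ℤ)) / 4

lemma Bf_eq (x y : ℝ) (u v : Fin 3 → ℤ) :
    Bf x y u v = (fun i => ((u i : ℝ))) ⬝ᵥ (GoI x y *ᵥ (fun i => ((v i : ℝ)))) := by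
  simp [Bf, GoI, Matrix.mulVec, dotProduct, Fin.sum_univ_three]
  ring

lemma det_GoI (x y : ℝ) : (GoI x y).det = x ^ 2 * y ^ 2 / 4 := by
  simp [GoI, Matrix.det_fin_three]
  ring

lemma vec_eq_zero_iff (u : Fin 3 → ℤ) : u = 0 ↔ u 0 = 0 ∧ u 1 = 0 ∧ u 2 = 0 := by
  constructor
  · intro h; simp [h]
  · rintro ⟨h0, h1, h2⟩; funext i; fin_cases i <;> assumption

lemma int_one_le_sq {a : ℤ} (ha : a ≠ 0) : (1 : ℝ) ≤ (a : ℝ) ^ 2 := by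
  have h : (1 : ℤ) ≤ a ^ 2 := by
    rcases lt_or_gt_of_ne ha with h | h <;> nlinarith
  exact_mod_cast h

lemma GoI_lb_even (x y : ℝ) (hx : 0 < x) (hxy : x < y) (hy : y < 1) (u : Fin 3 → ℤ)
    (hu : u ≠ 0) (he : Even (u 0 + u 1 + u 2)) : x ^ 2 ≤ Bf x y u u := by
  obtain ⟨k, hk⟩ := he
  set a : ℤ := k - u 1 with ha
  set b : ℤ := k - u 2 with hb
  set c : ℤ := k - u 1 - u 2 with hc
  have hB : Bf x y u u = (a:ℝ)^2 * x^2 + (b:ℝ)^2 * y^2 + (c:ℝ)^2 := by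
    have h2a : u 0 - u 1 + u 2 = 2*a := by omega
    have h2b : u 0 + u 1 - u 2 = 2*b := by omega
    have h2c : u 0 - u 1 - u 2 = 2*c := by omega
    simp only [Bf, h2a, h2b, h2c]
    push_cast; ring
  have hne : ¬ (a = 0 ∧ b = 0 ∧ c = 0) := by
    intro ⟨h1, h2, h3⟩
    exact hu ((vec_eq_zero_iff u).mpr (by omega))
  rw [hB]
  by_cases hA : a = 0
  · by_cases hBz : b = 0
    · have hc0 : c ≠ 0 := by tauto
      have := int_one_le_sq hc0
      nlinarith [sq_nonneg ((a:ℝ)), sq_nonneg ((b:ℝ))]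
    · have := int_one_le_sq hBz
      nlinarith [sq_nonneg ((a:ℝ)), sq_nonneg ((c:ℝ))]
  · have := int_one_le_sq hA
    nlinarith [sq_nonneg ((b:ℝ)), sq_nonneg ((c:ℝ))]

lemma GoI_lb_odd (x y : ℝ) (hx : 0 < x) (hxy : x < y) (hy : y < 1) (u : Fin 3 → ℤ)
    (ho : ¬ Even (u 0 + u 1 + u 2)) : (x ^ 2 + y ^ 2 + 1) / 4 ≤ Bf x y u u := by
  have ha : u 0 - u 1 + u 2 ≠ 0 := by
    intro h; exact ho ⟨u 1, by omega⟩
  have hb : u 0 + u 1 - u 2 ≠ 0 := by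
    intro h; exact ho ⟨u 2, by omega⟩
  have hc : u 0 - u 1 - u 2 ≠ 0 := by
    intro h; exact ho ⟨u 0, by omega⟩
  have h1 := int_one_le_sq ha
  have h2 := int_one_le_sq hb
  have h3 := int_one_le_sq hc
  simp only [Bf]
  push_cast at h1 h2 h3 ⊢
  nlinarith [sq_nonneg x, sq_nonneg y]

lemma GoI_lb_min (x y : ℝ) (hx : 0 < x) (hxy : x < y) (hy : y < 1) (u : Fin 3 → ℤ)
    (hu : u ≠ 0) : min (x ^ 2) ((x ^ 2 + y ^ 2 + 1) / 4) ≤ Bf x y u u := by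
  rcases Int.even_or_odd (u 0 + u 1 + u 2) with he | ho
  · exact le_trans (min_le_left _ _) (GoI_lb_even x y hx hxy hy u hu he)
  · exact le_trans (min_le_right _ _)
      (GoI_lb_odd x y hx hxy hy u (Int.not_even_iff_odd.mpr ho))

lemma GoI_lb_K (x y : ℝ) (hx : 0 < x) (hxy : x < y) (hy : y < 1) (u : Fin 3 → ℤ)
    (hu : u ≠ 0) (hA : u 0 - u 1 + u 2 = 0) : y ^ 2 ≤ Bf x y u u := by
  set b : ℤ := u 0 with hbdef
  set c : ℤ := - u 2 with hcdef
  have h2a : u 0 - u 1 + u 2 = 2*0 := by omega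
  have h2b : u 0 + u 1 - u 2 = 2*b := by omega
  have h2c : u 0 - u 1 - u 2 = 2*c := by omega
  have hB : Bf x y u u = (b:ℝ)^2 * y^2 + (c:ℝ)^2 := by
    simp only [Bf, h2a, h2b, h2c]
    push_cast; ring
  have hne : ¬ (b = 0 ∧ c = 0) := by
    intro ⟨h1, h2⟩
    exact hu ((vec_eq_zero_iff u).mpr (by omega))
  rw [hB]
  by_cases hb0 : b = 0
  · have hc0 : c ≠ 0 := by tauto
    have := int_one_le_sq hc0
    nlinarith [sq_nonneg ((b:ℝ))]
  · have := int_one_le_sq hb0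
    nlinarith [sq_nonneg ((c:ℝ))]

lemma GoI_classA (x y : ℝ) (hx : 0 < x) (hxy : x < y) (hy : y < 1)
    (h3 : 3 * x ^ 2 < y ^ 2 + 1) (u : Fin 3 → ℤ)
    (hq : Bf x y u u = x ^ 2) : u = ![1, 0, 1] ∨ u = ![-1, 0, -1] := by
  have hu : u ≠ 0 := by
    intro h; rw [h] at hq; simp [Bf] at hq; nlinarith
  have he : Even (u 0 + u 1 + u 2) := by
    by_contra ho
    have := GoI_lb_odd x y hx hxy hy u ho
    rw [hq] at this; nlinarith
  obtain ⟨k, hk⟩ := he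
  set a : ℤ := k - u 1 with ha
  set b : ℤ := k - u 2 with hb
  set c : ℤ := k - u 1 - u 2 with hc
  have h2a : u 0 - u 1 + u 2 = 2*a := by omega
  have h2b : u 0 + u 1 - u 2 = 2*b := by omega
  have h2c : u 0 - u 1 - u 2 = 2*c := by omega
  have hB : (a:ℝ)^2 * x^2 + (b:ℝ)^2 * y^2 + (c:ℝ)^2 = x^2 := by
    have hBf : Bf x y u u = (a:ℝ)^2 * x^2 + (b:ℝ)^2 * y^2 + (c:ℝ)^2 := by
      simp only [Bf, h2a, h2b, h2c]
      push_cast; ring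
    rw [← hBf, hq]
  have hb0 : b = 0 := by
    by_contra hb0
    have := int_one_le_sq hb0
    nlinarith [sq_nonneg ((a:ℝ)), sq_nonneg ((c:ℝ))]
  have hc0 : c = 0 := by
    by_contra hc0
    have := int_one_le_sq hc0
    nlinarith [sq_nonneg ((a:ℝ)), sq_nonneg ((b:ℝ))]
  have ha1 : (a:ℝ)^2 = 1 := by
    rw [hb0, hc0] at hB; push_cast at hB
    have hx2 : (0:ℝ) < x ^ 2 := by positivity
    have h' : (a:ℝ)^2 * x^2 = 1 * x^2 := by linarith
    exact mul_right_cancel₀ (ne_of_gt hx2) h'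
  have ha1' : a * a = 1 := by
    have : (a:ℝ) * (a:ℝ) = 1 := by nlinarith
    exact_mod_cast this
  have := Int.isUnit_iff.mp (IsUnit.of_mul_eq_one a ha1')
  rcases this with h | h
  · left; funext i; fin_cases i <;> simp <;> omega
  · right; funext i; fin_cases i <;> simp <;> omega

lemma GoI_classB_odd (x y : ℝ) (hx : 0 < x) (hxy : x < y) (hy : y < 1)
    (h3 : y ^ 2 + 1 < 3 * x ^ 2) (u : Fin 3 → ℤ)
    (hq : Bf x y u u = (x ^ 2 + y ^ 2 + 1) / 4) : ¬ Even (u 0 + u 1 + u 2) := by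
  intro he
  have hu : u ≠ 0 := by
    intro h; rw [h] at hq; simp [Bf] at hq; nlinarith
  have := GoI_lb_even x y hx hxy hy u hu he
  rw [hq] at this; nlinarith

lemma Bf_101 (x y : ℝ) : Bf x y ![1,0,1] ![1,0,1] = x ^ 2 := by norm_num [Bf, Matrix.cons_val_two, Matrix.vecHead, Matrix.vecTail]
lemma Bf_110 (x y : ℝ) : Bf x y ![1,1,0] ![1,1,0] = y ^ 2 := by norm_num [Bf, Matrix.cons_val_two, Matrix.vecHead, Matrix.vecTail]
lemma Bf_100 (x y : ℝ) : Bf x y ![1,0,0] ![1,0,0] = (x^2+y^2+1)/4 := by norm_num [Bf, Matrix.cons_val_two, Matrix.vecHead, Matrix.vecTail]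
lemma Bf_010 (x y : ℝ) : Bf x y ![0,1,0] ![0,1,0] = (x^2+y^2+1)/4 := by norm_num [Bf, Matrix.cons_val_two, Matrix.vecHead, Matrix.vecTail]
lemma Bf_001 (x y : ℝ) : Bf x y ![0,0,1] ![0,0,1] = (x^2+y^2+1)/4 := by norm_num [Bf, Matrix.cons_val_two, Matrix.vecHead, Matrix.vecTail]
lemma Bf_u_101 (x y : ℝ) (u : Fin 3 → ℤ) :
    Bf x y u ![1,0,1] = ((u 0 - u 1 + u 2 : ℤ) : ℝ) * x ^ 2 / 2 := by
  norm_num [Bf, Matrix.cons_val_two, Matrix.vecHead, Matrix.vecTail]; ring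
lemma Bf_u_m101 (x y : ℝ) (u : Fin 3 → ℤ) :
    Bf x y u ![-1,0,-1] = -(((u 0 - u 1 + u 2 : ℤ) : ℝ) * x ^ 2 / 2) := by
  norm_num [Bf, Matrix.cons_val_two, Matrix.vecHead, Matrix.vecTail]; ring

set_option maxHeartbeats 2000000 in
/-- If `0 < x₁ < y₁ < 1`, `0 < x₂ < y₂ < 1`, `g` is a `3×3` integer matrix
with determinant `±1`, and `λ > 0` satisfies `g · G_oI(x₁, y₁) · gᵀ = λ · G_oI(x₂, y₂)`,
then `x₁ = x₂`, `y₁ = y₂` and `λ = 1`. -/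
theorem stmt16 (x₁ y₁ x₂ y₂ : ℝ) (hx₁ : 0 < x₁) (hxy₁ : x₁ < y₁) (hy₁ : y₁ < 1)
    (hx₂ : 0 < x₂) (hxy₂ : x₂ < y₂) (hy₂ : y₂ < 1)
    (g : Matrix (Fin 3) (Fin 3) ℤ) (hg : g.det = 1 ∨ g.det = -1)
    (lam : ℝ) (hlam : 0 < lam)
    (heq : g.map (Int.cast : ℤ → ℝ) * GoI x₁ y₁ * (g.map (Int.cast : ℤ → ℝ))ᵀ =
      lam • GoI x₂ y₂) :
    x₁ = x₂ ∧ y₁ = y₂ ∧ lam = 1 := by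
  -- the key transport identity
  have key : ∀ u v : Fin 3 → ℤ,
      Bf x₁ y₁ (u ᵥ* g) (v ᵥ* g) = lam * Bf x₂ y₂ u v := by
    intro u v
    have hcast : ∀ w : Fin 3 → ℤ,
        (fun i => ((Matrix.vecMul w g i : ℤ) : ℝ)) =
          Matrix.vecMul (fun i => ((w i : ℝ))) (g.map (Int.cast : ℤ → ℝ)) := by
      intro w; ext i
      simp [Matrix.vecMul, dotProduct, Fin.sum_univ_three]
    rw [Bf_eq, Bf_eq, hcast, hcast]
    set gR := g.map (Int.cast : ℤ → ℝ)
    set uR := (fun i => ((u i : ℝ)))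
    set vR := (fun i => ((v i : ℝ)))
    calc (uR ᵥ* gR) ⬝ᵥ (GoI x₁ y₁ *ᵥ (vR ᵥ* gR))
        = uR ⬝ᵥ ((gR * GoI x₁ y₁ * gRᵀ) *ᵥ vR) := by
          rw [← Matrix.mulVec_transpose gR vR, Matrix.dotProduct_mulVec,
            Matrix.dotProduct_mulVec, Matrix.dotProduct_mulVec,
            Matrix.vecMul_vecMul, Matrix.vecMul_vecMul, mul_assoc]
      _ = lam * (uR ⬝ᵥ (GoI x₂ y₂ *ᵥ vR)) := by
          rw [heq, Matrix.smul_mulVec, dotProduct_smul, smul_eq_mul]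
  -- inverse matrix
  have hdet2 : g.det * g.det = 1 := by rcases hg with h | h <;> rw [h] <;> norm_num
  set g' : Matrix (Fin 3) (Fin 3) ℤ := g.det • g.adjugate with hg'def
  have hgg' : g * g' = 1 := by
    rw [hg'def, Matrix.mul_smul, Matrix.mul_adjugate, smul_smul, hdet2, one_smul]
  have hg'g : g' * g = 1 := by
    rw [hg'def, Matrix.smul_mul, Matrix.adjugate_mul, smul_smul, hdet2, one_smul]
  have hpsi : ∀ u : Fin 3 → ℤ, (u ᵥ* g) ᵥ* g' = u := by
    intro u; rw [Matrix.vecMul_vecMul, hgg', Matrix.vecMul_one]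
  have hpsi' : ∀ u : Fin 3 → ℤ, (u ᵥ* g') ᵥ* g = u := by
    intro u; rw [Matrix.vecMul_vecMul, hg'g, Matrix.vecMul_one]
  have key' : ∀ u v : Fin 3 → ℤ,
      lam * Bf x₂ y₂ (u ᵥ* g') (v ᵥ* g') = Bf x₁ y₁ u v := by
    intro u v
    conv_rhs => rw [← hpsi' u, ← hpsi' v]
    rw [key]
  have hne : ∀ u : Fin 3 → ℤ, u ≠ 0 → u ᵥ* g ≠ 0 := by
    intro u hu h; apply hu
    rw [← hpsi u, h, Matrix.zero_vecMul]
  have hne' : ∀ u : Fin 3 → ℤ, u ≠ 0 → u ᵥ* g' ≠ 0 := by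
    intro u hu h; apply hu
    rw [← hpsi' u, h, Matrix.zero_vecMul]
  -- determinant identity
  have hdet : x₁^2 * y₁^2 = lam^3 * (x₂^2 * y₂^2) := by
    have h := congrArg Matrix.det heq
    have hdg : (g.map (Int.cast : ℤ → ℝ)).det = ((g.det : ℤ) : ℝ) :=
      (RingHom.map_det (Int.castRingHom ℝ) g).symm
    rw [Matrix.det_mul, Matrix.det_mul, Matrix.det_transpose, Matrix.det_smul,
      det_GoI, det_GoI, hdg] at h
    have hd1 : ((g.det : ℤ) : ℝ) * ((g.det : ℤ) : ℝ) = 1 := by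
      exact_mod_cast congrArg (fun n : ℤ => ((n : ℤ) : ℝ)) hdet2
    simp only [Fintype.card_fin] at h
    linear_combination 4*h - x₁^2*y₁^2 * hd1
  -- nonzero literals
  have hne101 : (![1,0,1] : Fin 3 → ℤ) ≠ 0 := by
    intro h; simpa using congrFun h 0
  have hne100 : (![1,0,0] : Fin 3 → ℤ) ≠ 0 := by
    intro h; simpa using congrFun h 0
  have hne010 : (![0,1,0] : Fin 3 → ℤ) ≠ 0 := by
    intro h; simpa using congrFun h 1
  have hne001 : (![0,0,1] : Fin 3 → ℤ) ≠ 0 := by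
    intro h; simpa using congrFun h 2
  have hne110 : (![1,1,0] : Fin 3 → ℤ) ≠ 0 := by
    intro h; simpa using congrFun h 0
  -- min transport
  have hwit : ∀ x y : ℝ, 0 < x → x < y → y < 1 →
      ∃ w : Fin 3 → ℤ, w ≠ 0 ∧ Bf x y w w = min (x^2) ((x^2+y^2+1)/4) := by
    intro x y hx hxy hy
    rcases le_total (x^2) ((x^2+y^2+1)/4) with h | h
    · exact ⟨![1,0,1], by intro hh; simpa using congrFun hh 0,
        by rw [min_eq_left h, Bf_101]⟩
    · exact ⟨![1,0,0], by intro hh; simpa using congrFun hh 0,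
        by rw [min_eq_right h, Bf_100]⟩
  have hm : min (x₁^2) ((x₁^2+y₁^2+1)/4) = lam * min (x₂^2) ((x₂^2+y₂^2+1)/4) := by
    apply le_antisymm
    · obtain ⟨w, hw0, hwq⟩ := hwit x₂ y₂ hx₂ hxy₂ hy₂
      have h1 := GoI_lb_min x₁ y₁ hx₁ hxy₁ hy₁ (w ᵥ* g) (hne w hw0)
      rw [key, hwq] at h1
      exact h1
    · obtain ⟨w, hw0, hwq⟩ := hwit x₁ y₁ hx₁ hxy₁ hy₁
      have h1 := GoI_lb_min x₂ y₂ hx₂ hxy₂ hy₂ (w ᵥ* g') (hne' w hw0)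
      have h2 := key' w w
      rw [hwq] at h2
      nlinarith [h1, h2, hlam]
  -- final cleanup helper
  have hfin : x₁^2 = x₂^2 → y₁^2 = y₂^2 → lam = 1 → x₁ = x₂ ∧ y₁ = y₂ ∧ lam = 1 := by
    intro hxs hys hl
    refine ⟨le_antisymm ?_ ?_, le_antisymm ?_ ?_, hl⟩ <;> nlinarith

  have hcancel : ∀ r t : ℝ, lam * r = lam * t → r = t :=
    fun r t h => mul_left_cancel₀ (ne_of_gt hlam) h
  have hinjg : ∀ u v : Fin 3 → ℤ, u ᵥ* g = v ᵥ* g → u = v := by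
    intro u v h; rw [← hpsi u, h, hpsi v]
  have hinjg' : ∀ u v : Fin 3 → ℤ, u ᵥ* g' = v ᵥ* g' → u = v := by
    intro u v h; rw [← hpsi' u, h, hpsi' v]
  rcases lt_trichotomy (3*x₂^2) (y₂^2+1) with h₂ | h₂ | h₂ <;>
    rcases lt_trichotomy (3*x₁^2) (y₁^2+1) with h₁ | h₁ | h₁
  -- case (A, A)
  · have hm₂ : min (x₂^2) ((x₂^2+y₂^2+1)/4) = x₂^2 := min_eq_left (by linarith)
    have hm₁ : min (x₁^2) ((x₁^2+y₁^2+1)/4) = x₁^2 := min_eq_left (by linarith)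
    rw [hm₁, hm₂] at hm
    have hq1 : Bf x₁ y₁ (![1,0,1] ᵥ* g) (![1,0,1] ᵥ* g) = x₁^2 := by
      rw [key, Bf_101, ← hm]
    have hcl := GoI_classA x₁ y₁ hx₁ hxy₁ hy₁ h₁ _ hq1
    have hq2 : Bf x₂ y₂ (![1,0,1] ᵥ* g') (![1,0,1] ᵥ* g') = x₂^2 := by
      apply hcancel; rw [key', Bf_101, hm]
    have hcl' := GoI_classA x₂ y₂ hx₂ hxy₂ hy₂ h₂ _ hq2
    have hK : ∀ u : Fin 3 → ℤ, u 0 - u 1 + u 2 = 0 →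
        (u ᵥ* g) 0 - (u ᵥ* g) 1 + (u ᵥ* g) 2 = 0 := by
      intro u hu
      have h0 : Bf x₁ y₁ (u ᵥ* g) (![1,0,1] ᵥ* g) = 0 := by
        rw [key, Bf_u_101, hu]; simp
      have hx2 : x₁ ^ 2 ≠ 0 := by positivity
      rcases hcl with hcc | hcc <;> rw [hcc] at h0
      · rw [Bf_u_101] at h0
        have h0' : (((u ᵥ* g) 0 - (u ᵥ* g) 1 + (u ᵥ* g) 2 : ℤ) : ℝ) * x₁^2 = 0 := by
          linarith
        rcases mul_eq_zero.mp h0' with h | h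
        · exact_mod_cast h
        · exact absurd h hx2
      · rw [Bf_u_m101] at h0
        have h0' : (((u ᵥ* g) 0 - (u ᵥ* g) 1 + (u ᵥ* g) 2 : ℤ) : ℝ) * x₁^2 = 0 := by
          linarith
        rcases mul_eq_zero.mp h0' with h | h
        · exact_mod_cast h
        · exact absurd h hx2
    have hK' : ∀ u : Fin 3 → ℤ, u 0 - u 1 + u 2 = 0 →
        (u ᵥ* g') 0 - (u ᵥ* g') 1 + (u ᵥ* g') 2 = 0 := by
      intro u hu
      have h0 : Bf x₂ y₂ (u ᵥ* g') (![1,0,1] ᵥ* g') = 0 := by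
        apply hcancel; rw [key', Bf_u_101, hu]; simp
      have hx2 : x₂ ^ 2 ≠ 0 := by positivity
      rcases hcl' with hcc | hcc <;> rw [hcc] at h0
      · rw [Bf_u_101] at h0
        have h0' : (((u ᵥ* g') 0 - (u ᵥ* g') 1 + (u ᵥ* g') 2 : ℤ) : ℝ) * x₂^2 = 0 := by
          linarith
        rcases mul_eq_zero.mp h0' with h | h
        · exact_mod_cast h
        · exact absurd h hx2
      · rw [Bf_u_m101] at h0
        have h0' : (((u ᵥ* g') 0 - (u ᵥ* g') 1 + (u ᵥ* g') 2 : ℤ) : ℝ) * x₂^2 = 0 := by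
          linarith
        rcases mul_eq_zero.mp h0' with h | h
        · exact_mod_cast h
        · exact absurd h hx2
    have hKa : (![1,1,0] : Fin 3 → ℤ) 0 - (![1,1,0] : Fin 3 → ℤ) 1
        + (![1,1,0] : Fin 3 → ℤ) 2 = 0 := by decide
    have hy1 : y₁^2 ≤ lam * y₂^2 := by
      have h1 := GoI_lb_K x₁ y₁ hx₁ hxy₁ hy₁ (![1,1,0] ᵥ* g) (hne _ hne110) (hK _ hKa)
      rw [key, Bf_110] at h1; exact h1
    have hy2 : lam * y₂^2 ≤ y₁^2 := by
      have h1 := GoI_lb_K x₂ y₂ hx₂ hxy₂ hy₂ (![1,1,0] ᵥ* g') (hne' _ hne110) (hK' _ hKa)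
      have h2 := key' ![1,1,0] ![1,1,0]
      rw [Bf_110] at h2
      nlinarith
    have hyy : y₁^2 = lam * y₂^2 := le_antisymm hy1 hy2
    have hfac : lam^2 * (x₂^2*y₂^2) * (lam - 1) = 0 := by
      linear_combination (-1)*hdet + y₁^2*hm + lam*x₂^2*hyy
    have hy₂0 : 0 < y₂ := lt_trans hx₂ hxy₂
    have hX : lam^2 * (x₂^2*y₂^2) ≠ 0 :=
      ne_of_gt (mul_pos (pow_pos hlam 2) (mul_pos (pow_pos hx₂ 2) (pow_pos hy₂0 2)))
    have hl1 : lam = 1 := by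
      rcases mul_eq_zero.mp hfac with h | h
      · exact absurd h hX
      · linarith
    rw [hl1, one_mul] at hm hyy
    exact hfin hm hyy hl1
  -- case (A, C) : pigeonhole
  · have hm₂ : min (x₂^2) ((x₂^2+y₂^2+1)/4) = x₂^2 := min_eq_left (by linarith)
    have hm₁ : min (x₁^2) ((x₁^2+y₁^2+1)/4) = (x₁^2+y₁^2+1)/4 := min_eq_right (by linarith)
    rw [hm₁, hm₂] at hm
    have hq : ∀ e : Fin 3 → ℤ, Bf x₁ y₁ e e = (x₁^2+y₁^2+1)/4 →
        (e ᵥ* g') = ![1,0,1] ∨ (e ᵥ* g') = ![-1,0,-1] := by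
      intro e he
      apply GoI_classA x₂ y₂ hx₂ hxy₂ hy₂ h₂
      apply hcancel
      rw [key', he, hm]
    have hc1 := hq ![1,0,0] (Bf_100 x₁ y₁)
    have hc2 := hq ![0,1,0] (Bf_010 x₁ y₁)
    have hc3 := hq ![0,0,1] (Bf_001 x₁ y₁)
    exfalso
    rcases hc1 with h1 | h1 <;> rcases hc2 with h2 | h2 <;> rcases hc3 with h3 | h3 <;>
      first
        | exact absurd (congrFun (hinjg' ![1,0,0] ![0,1,0] (h1.trans h2.symm)) 0) (by decide)
        | exact absurd (congrFun (hinjg' ![1,0,0] ![0,0,1] (h1.trans h3.symm)) 0) (by decide)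
        | exact absurd (congrFun (hinjg' ![0,1,0] ![0,0,1] (h2.trans h3.symm)) 1) (by decide)
  -- case (A, B) : pigeonhole
  · have hm₂ : min (x₂^2) ((x₂^2+y₂^2+1)/4) = x₂^2 := min_eq_left (by linarith)
    have hm₁ : min (x₁^2) ((x₁^2+y₁^2+1)/4) = (x₁^2+y₁^2+1)/4 := min_eq_right (by linarith)
    rw [hm₁, hm₂] at hm
    have hq : ∀ e : Fin 3 → ℤ, Bf x₁ y₁ e e = (x₁^2+y₁^2+1)/4 →
        (e ᵥ* g') = ![1,0,1] ∨ (e ᵥ* g') = ![-1,0,-1] := by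
      intro e he
      apply GoI_classA x₂ y₂ hx₂ hxy₂ hy₂ h₂
      apply hcancel
      rw [key', he, hm]
    have hc1 := hq ![1,0,0] (Bf_100 x₁ y₁)
    have hc2 := hq ![0,1,0] (Bf_010 x₁ y₁)
    have hc3 := hq ![0,0,1] (Bf_001 x₁ y₁)
    exfalso
    rcases hc1 with h1 | h1 <;> rcases hc2 with h2 | h2 <;> rcases hc3 with h3 | h3 <;>
      first
        | exact absurd (congrFun (hinjg' ![1,0,0] ![0,1,0] (h1.trans h2.symm)) 0) (by decide)
        | exact absurd (congrFun (hinjg' ![1,0,0] ![0,0,1] (h1.trans h3.symm)) 0) (by decide)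
        | exact absurd (congrFun (hinjg' ![0,1,0] ![0,0,1] (h2.trans h3.symm)) 1) (by decide)
  -- case (C, A) : pigeonhole
  · have hm₂ : min (x₂^2) ((x₂^2+y₂^2+1)/4) = (x₂^2+y₂^2+1)/4 := min_eq_right (by linarith)
    have hm₁ : min (x₁^2) ((x₁^2+y₁^2+1)/4) = x₁^2 := min_eq_left (by linarith)
    rw [hm₁, hm₂] at hm
    have hq : ∀ e : Fin 3 → ℤ, Bf x₂ y₂ e e = (x₂^2+y₂^2+1)/4 →
        (e ᵥ* g) = ![1,0,1] ∨ (e ᵥ* g) = ![-1,0,-1] := by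
      intro e he
      apply GoI_classA x₁ y₁ hx₁ hxy₁ hy₁ h₁
      rw [key, he]; exact hm.symm
    have hc1 := hq ![1,0,0] (Bf_100 x₂ y₂)
    have hc2 := hq ![0,1,0] (Bf_010 x₂ y₂)
    have hc3 := hq ![0,0,1] (Bf_001 x₂ y₂)
    exfalso
    rcases hc1 with h1 | h1 <;> rcases hc2 with h2 | h2 <;> rcases hc3 with h3 | h3 <;>
      first
        | exact absurd (congrFun (hinjg ![1,0,0] ![0,1,0] (h1.trans h2.symm)) 0) (by decide)
        | exact absurd (congrFun (hinjg ![1,0,0] ![0,0,1] (h1.trans h3.symm)) 0) (by decide)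
        | exact absurd (congrFun (hinjg ![0,1,0] ![0,0,1] (h2.trans h3.symm)) 1) (by decide)
  -- case (C, C)
  · have hm₂ : min (x₂^2) ((x₂^2+y₂^2+1)/4) = x₂^2 := min_eq_left (by linarith)
    have hm₁ : min (x₁^2) ((x₁^2+y₁^2+1)/4) = x₁^2 := min_eq_left (by linarith)
    rw [hm₁, hm₂] at hm
    have hpos : lam * x₂^2 ≠ 0 := ne_of_gt (mul_pos hlam (pow_pos hx₂ 2))
    have hyy : y₁^2 = lam^2 * y₂^2 := by
      apply mul_left_cancel₀ hpos
      linear_combination hdet - y₁^2 * hm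
    have hfac : (lam - 1) * (lam*y₂^2 - 1) = 0 := by
      linear_combination (-1)*h₁ + lam*h₂ + 3*hm - hyy
    rcases mul_eq_zero.mp hfac with h | h
    · have hl1 : lam = 1 := by linarith
      rw [hl1, one_mul] at hm
      rw [hl1] at hyy
      exact hfin hm (by linarith [hyy]) hl1
    · exfalso
      have h5 : y₁^2 = lam := by linear_combination hyy + lam * h
      have hy22 : y₂^2 < 1 := by nlinarith
      have h6 : 1 < lam := by
        nlinarith [mul_pos hlam (show (0:ℝ) < 1 - y₂^2 by linarith)]
      have hy12 : y₁^2 < 1 := by nlinarith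
      linarith
  -- case (C, B) : parity contradiction via ψ
  · have hm₂ : min (x₂^2) ((x₂^2+y₂^2+1)/4) = x₂^2 := min_eq_left (by linarith)
    have hm₁ : min (x₁^2) ((x₁^2+y₁^2+1)/4) = (x₁^2+y₁^2+1)/4 := min_eq_right (by linarith)
    rw [hm₁, hm₂] at hm
    have hodd : ∀ e : Fin 3 → ℤ, Bf x₂ y₂ e e = x₂^2 →
        ¬ Even ((e ᵥ* g) 0 + (e ᵥ* g) 1 + (e ᵥ* g) 2) := by
      intro e he
      apply GoI_classB_odd x₁ y₁ hx₁ hxy₁ hy₁ h₁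
      rw [key, he]; exact hm.symm
    have ho1 := hodd ![1,0,0] (by rw [Bf_100]; linarith)
    have ho3 := hodd ![0,0,1] (by rw [Bf_001]; linarith)
    have hoP := hodd ![1,0,1] (Bf_101 x₂ y₂)
    exfalso
    have haddv : (![1,0,1] : Fin 3 → ℤ) = ![1,0,0] + ![0,0,1] := by
      funext i; fin_cases i <;> rfl
    have hadd : ∀ i, ((![1,0,1] : Fin 3 → ℤ) ᵥ* g) i
        = (![1,0,0] ᵥ* g) i + (![0,0,1] ᵥ* g) i := by
      intro i; rw [haddv, Matrix.add_vecMul]; rfl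
    obtain ⟨k1, hk1⟩ := Int.not_even_iff_odd.mp ho1
    obtain ⟨k3, hk3⟩ := Int.not_even_iff_odd.mp ho3
    exact hoP ⟨k1 + k3 + 1, by rw [hadd 0, hadd 1, hadd 2]; omega⟩
  -- case (B, A) : pigeonhole
  · have hm₂ : min (x₂^2) ((x₂^2+y₂^2+1)/4) = (x₂^2+y₂^2+1)/4 := min_eq_right (by linarith)
    have hm₁ : min (x₁^2) ((x₁^2+y₁^2+1)/4) = x₁^2 := min_eq_left (by linarith)
    rw [hm₁, hm₂] at hm
    have hq : ∀ e : Fin 3 → ℤ, Bf x₂ y₂ e e = (x₂^2+y₂^2+1)/4 →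
        (e ᵥ* g) = ![1,0,1] ∨ (e ᵥ* g) = ![-1,0,-1] := by
      intro e he
      apply GoI_classA x₁ y₁ hx₁ hxy₁ hy₁ h₁
      rw [key, he]; exact hm.symm
    have hc1 := hq ![1,0,0] (Bf_100 x₂ y₂)
    have hc2 := hq ![0,1,0] (Bf_010 x₂ y₂)
    have hc3 := hq ![0,0,1] (Bf_001 x₂ y₂)
    exfalso
    rcases hc1 with h1 | h1 <;> rcases hc2 with h2 | h2 <;> rcases hc3 with h3 | h3 <;>
      first
        | exact absurd (congrFun (hinjg ![1,0,0] ![0,1,0] (h1.trans h2.symm)) 0) (by decide)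
        | exact absurd (congrFun (hinjg ![1,0,0] ![0,0,1] (h1.trans h3.symm)) 0) (by decide)
        | exact absurd (congrFun (hinjg ![0,1,0] ![0,0,1] (h2.trans h3.symm)) 1) (by decide)
  -- case (B, C) : parity contradiction via ψ'
  · have hm₂ : min (x₂^2) ((x₂^2+y₂^2+1)/4) = (x₂^2+y₂^2+1)/4 := min_eq_right (by linarith)
    have hm₁ : min (x₁^2) ((x₁^2+y₁^2+1)/4) = x₁^2 := min_eq_left (by linarith)
    rw [hm₁, hm₂] at hm
    have hodd : ∀ e : Fin 3 → ℤ, Bf x₁ y₁ e e = x₁^2 →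
        ¬ Even ((e ᵥ* g') 0 + (e ᵥ* g') 1 + (e ᵥ* g') 2) := by
      intro e he
      apply GoI_classB_odd x₂ y₂ hx₂ hxy₂ hy₂ h₂
      apply hcancel
      rw [key', he, hm]
    have ho1 := hodd ![1,0,0] (by rw [Bf_100]; linarith)
    have ho3 := hodd ![0,0,1] (by rw [Bf_001]; linarith)
    have hoP := hodd ![1,0,1] (Bf_101 x₁ y₁)
    exfalso
    have haddv : (![1,0,1] : Fin 3 → ℤ) = ![1,0,0] + ![0,0,1] := by
      funext i; fin_cases i <;> rfl
    have hadd : ∀ i, ((![1,0,1] : Fin 3 → ℤ) ᵥ* g') i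
        = (![1,0,0] ᵥ* g') i + (![0,0,1] ᵥ* g') i := by
      intro i; rw [haddv, Matrix.add_vecMul]; rfl
    obtain ⟨k1, hk1⟩ := Int.not_even_iff_odd.mp ho1
    obtain ⟨k3, hk3⟩ := Int.not_even_iff_odd.mp ho3
    exact hoP ⟨k1 + k3 + 1, by rw [hadd 0, hadd 1, hadd 2]; omega⟩
  -- case (B, B)
  · have hm₂ : min (x₂^2) ((x₂^2+y₂^2+1)/4) = (x₂^2+y₂^2+1)/4 := min_eq_right (by linarith)
    have hm₁ : min (x₁^2) ((x₁^2+y₁^2+1)/4) = (x₁^2+y₁^2+1)/4 := min_eq_right (by linarith)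
    rw [hm₁, hm₂] at hm
    have hodd : ∀ e : Fin 3 → ℤ, Bf x₂ y₂ e e = (x₂^2+y₂^2+1)/4 →
        ¬ Even ((e ᵥ* g) 0 + (e ᵥ* g) 1 + (e ᵥ* g) 2) := by
      intro e he
      apply GoI_classB_odd x₁ y₁ hx₁ hxy₁ hy₁ h₁
      rw [key, he]; exact hm.symm
    have hodd' : ∀ e : Fin 3 → ℤ, Bf x₁ y₁ e e = (x₁^2+y₁^2+1)/4 →
        ¬ Even ((e ᵥ* g') 0 + (e ᵥ* g') 1 + (e ᵥ* g') 2) := by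
      intro e he
      apply GoI_classB_odd x₂ y₂ hx₂ hxy₂ hy₂ h₂
      apply hcancel
      rw [key', he, hm]
    have ho1 := hodd ![1,0,0] (Bf_100 x₂ y₂)
    have ho2 := hodd ![0,1,0] (Bf_010 x₂ y₂)
    have ho3 := hodd ![0,0,1] (Bf_001 x₂ y₂)
    have ho1' := hodd' ![1,0,0] (Bf_100 x₁ y₁)
    have ho2' := hodd' ![0,1,0] (Bf_010 x₁ y₁)
    have ho3' := hodd' ![0,0,1] (Bf_001 x₁ y₁)
    have hsum : ∀ (M : Matrix (Fin 3) (Fin 3) ℤ) (u : Fin 3 → ℤ),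
        (u ᵥ* M) 0 + (u ᵥ* M) 1 + (u ᵥ* M) 2
        = u 0 * ((![1,0,0] ᵥ* M) 0 + (![1,0,0] ᵥ* M) 1 + (![1,0,0] ᵥ* M) 2)
        + u 1 * ((![0,1,0] ᵥ* M) 0 + (![0,1,0] ᵥ* M) 1 + (![0,1,0] ᵥ* M) 2)
        + u 2 * ((![0,0,1] ᵥ* M) 0 + (![0,0,1] ᵥ* M) 1 + (![0,0,1] ᵥ* M) 2) := by
      intro M u
      simp [Matrix.vecMul, dotProduct, Fin.sum_univ_three]
      ring
    have hE : ∀ u : Fin 3 → ℤ, Even (u 0 + u 1 + u 2) →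
        Even ((u ᵥ* g) 0 + (u ᵥ* g) 1 + (u ᵥ* g) 2) := by
      rintro u ⟨t, ht⟩
      obtain ⟨k1, hk1⟩ := Int.not_even_iff_odd.mp ho1
      obtain ⟨k2, hk2⟩ := Int.not_even_iff_odd.mp ho2
      obtain ⟨k3, hk3⟩ := Int.not_even_iff_odd.mp ho3
      exact ⟨u 0 * k1 + u 1 * k2 + u 2 * k3 + t, by
        rw [hsum g u, hk1, hk2, hk3]; linear_combination ht⟩
    have hE' : ∀ u : Fin 3 → ℤ, Even (u 0 + u 1 + u 2) →
        Even ((u ᵥ* g') 0 + (u ᵥ* g') 1 + (u ᵥ* g') 2) := by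
      rintro u ⟨t, ht⟩
      obtain ⟨k1, hk1⟩ := Int.not_even_iff_odd.mp ho1'
      obtain ⟨k2, hk2⟩ := Int.not_even_iff_odd.mp ho2'
      obtain ⟨k3, hk3⟩ := Int.not_even_iff_odd.mp ho3'
      exact ⟨u 0 * k1 + u 1 * k2 + u 2 * k3 + t, by
        rw [hsum g' u, hk1, hk2, hk3]; linear_combination ht⟩
    have hPeven : Even ((![1,0,1] : Fin 3 → ℤ) 0 + (![1,0,1] : Fin 3 → ℤ) 1
        + (![1,0,1] : Fin 3 → ℤ) 2) := by decide
    have hxx : x₁^2 = lam * x₂^2 := by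
      apply le_antisymm
      · have h1 := GoI_lb_even x₁ y₁ hx₁ hxy₁ hy₁ _ (hne _ hne101) (hE ![1,0,1] hPeven)
        rw [key, Bf_101] at h1; exact h1
      · have h1 := GoI_lb_even x₂ y₂ hx₂ hxy₂ hy₂ _ (hne' _ hne101) (hE' ![1,0,1] hPeven)
        have h2 := key' ![1,0,1] ![1,0,1]
        rw [Bf_101] at h2
        nlinarith
    have hpos : lam * x₂^2 ≠ 0 := ne_of_gt (mul_pos hlam (pow_pos hx₂ 2))
    have hyy : y₁^2 = lam^2 * y₂^2 := by
      apply mul_left_cancel₀ hpos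
      linear_combination hdet - y₁^2 * hxx
    have hfac : (lam - 1) * (lam*y₂^2 - 1) = 0 := by
      linear_combination 4*hm - hxx - hyy
    rcases mul_eq_zero.mp hfac with h | h
    · have hl1 : lam = 1 := by linarith
      rw [hl1, one_mul] at hxx
      rw [hl1] at hyy
      exact hfin hxx (by linarith [hyy]) hl1
    · exfalso
      have h5 : y₁^2 = lam := by linear_combination hyy + lam * h
      have hy22 : y₂^2 < 1 := by nlinarith
      have h6 : 1 < lam := by
        nlinarith [mul_pos hlam (show (0:ℝ) < 1 - y₂^2 by linarith)]
      have hy12 : y₁^2 < 1 := by nlinarith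
      linarith
end

section
/- Let SC be the set of triples (g₁, g₂, g₃) ∈ ℤ³ such that each gᵢ is squarefree, the gᵢ are pairwise distinct, gcd(gᵢ, gⱼ) = 1 for all i ≠ j, and at most one of g₁, g₂, g₃ is negative. Let D be the set of triples (D₁, D₂, D₃) ∈ ℤ³ such that each Dᵢ is squarefree, Dᵢ ∉ {0, 1}, and for every permutation {i, j, k} = {1, 2, 3} one has Dᵢ = Dⱼ·D_k / gcd(Dⱼ, D_k)², where gcd denotes the positive greatest common divisor. Then the map (g₁, g₂, g₃) ↦ (g₂g₃, g₁g₃, g₁g₂) is a bijection from SC onto D. -/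
lemma sqf_mul' {a b : ℤ} (ha : Squarefree a) (hb : Squarefree b)
    (h : Int.gcd a b = 1) : Squarefree (a * b) :=
  squarefree_mul_iff.mpr ⟨(Int.isCoprime_iff_gcd_eq_one.mpr h).isRelPrime, ha, hb⟩

lemma gcd_one_of_sqf_mul {a b : ℤ} (h : Squarefree (a * b)) : Int.gcd a b = 1 :=
  Int.isCoprime_iff_gcd_eq_one.mp (squarefree_mul_iff.mp h).1.isCoprime

lemma prod_ne_one' {a b : ℤ} (hne : a ≠ b) (h1 : a * b = 1) : False := by
  have ha := Int.isUnit_iff.mp (IsUnit.of_mul_eq_one (a := a) b h1)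
  rcases ha with rfl | rfl <;> simp at h1 <;> omega

lemma eq_of_sq_eq_sq' {x y : ℤ} (hx : 0 ≤ x) (hy : 0 ≤ y) (h : x ^ 2 = y ^ 2) :
    x = y := by
  have h0 : (x - y) * (x + y) = 0 := by linear_combination h
  rcases mul_eq_zero.mp h0 with h' | h' <;> linarith

lemma natAbs_sq_cast (a : ℤ) : ((a.natAbs : ℤ)) ^ 2 = a ^ 2 := by
  rw [sq, sq, Int.natAbs_mul_self']

lemma key_ne' {x y : ℤ} (hx : 0 < x) (hg : Int.gcd x y = 1) (hxy : x = y) :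
    x = 1 ∧ y = 1 := by
  subst hxy
  rw [Int.gcd_self] at hg
  omega

lemma sqf_neg' {a : ℤ} (h : Squarefree a) : Squarefree (-a) :=
  h.squarefree_of_dvd (neg_dvd.mpr dvd_rfl)

lemma gcd_neg_left' (x y : ℤ) : Int.gcd (-x) y = Int.gcd x y := by
  simp [Int.gcd_def]

lemma gcd_neg_right' (x y : ℤ) : Int.gcd x (-y) = Int.gcd x y := by
  simp [Int.gcd_def]

set_option maxHeartbeats 4000000 in
/-- The map `(g₁, g₂, g₃) ↦ (g₂g₃, g₁g₃, g₁g₂)` is a bijection from the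
set `SC` of `∗`-strongly carefree triples (squarefree, pairwise distinct, pairwise
coprime, at most one negative) onto the set `D` of triples of squarefree integers
`Dᵢ ∉ {0, 1}` with `Dᵢ·gcd(Dⱼ, D_k)² = Dⱼ·D_k` for every permutation `{i,j,k} = {1,2,3}`. -/
theorem stmt17 :
    Set.BijOn (fun g : ℤ × ℤ × ℤ => (g.2.1 * g.2.2, g.1 * g.2.2, g.1 * g.2.1))
      {g : ℤ × ℤ × ℤ |
        Squarefree g.1 ∧ Squarefree g.2.1 ∧ Squarefree g.2.2 ∧
        g.1 ≠ g.2.1 ∧ g.1 ≠ g.2.2 ∧ g.2.1 ≠ g.2.2 ∧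
        Int.gcd g.1 g.2.1 = 1 ∧ Int.gcd g.1 g.2.2 = 1 ∧ Int.gcd g.2.1 g.2.2 = 1 ∧
        ¬(g.1 < 0 ∧ g.2.1 < 0) ∧ ¬(g.1 < 0 ∧ g.2.2 < 0) ∧ ¬(g.2.1 < 0 ∧ g.2.2 < 0)}
      {D : ℤ × ℤ × ℤ |
        Squarefree D.1 ∧ Squarefree D.2.1 ∧ Squarefree D.2.2 ∧
        D.1 ≠ 0 ∧ D.1 ≠ 1 ∧ D.2.1 ≠ 0 ∧ D.2.1 ≠ 1 ∧ D.2.2 ≠ 0 ∧ D.2.2 ≠ 1 ∧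
        D.1 * (Int.gcd D.2.1 D.2.2 : ℤ) ^ 2 = D.2.1 * D.2.2 ∧
        D.2.1 * (Int.gcd D.1 D.2.2 : ℤ) ^ 2 = D.1 * D.2.2 ∧
        D.2.2 * (Int.gcd D.1 D.2.1 : ℤ) ^ 2 = D.1 * D.2.1} := by
  refine ⟨?_, ?_, ?_⟩
  · -- MapsTo
    rintro ⟨g1, g2, g3⟩ hg
    simp only [Set.mem_setOf_eq] at hg ⊢
    obtain ⟨s1, s2, s3, hne12, hne13, hne23, h12, h13, h23, -, -, -⟩ := hg
    refine ⟨sqf_mul' s2 s3 h23, sqf_mul' s1 s3 h13, sqf_mul' s1 s2 h12,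
      mul_ne_zero s2.ne_zero s3.ne_zero, fun h => prod_ne_one' hne23 h,
      mul_ne_zero s1.ne_zero s3.ne_zero, fun h => prod_ne_one' hne13 h,
      mul_ne_zero s1.ne_zero s2.ne_zero, fun h => prod_ne_one' hne12 h, ?_, ?_, ?_⟩
    · rw [Int.gcd_mul_left, Int.gcd_comm g3 g2, h23, mul_one]
      linear_combination (g2 * g3) * natAbs_sq_cast g1
    · rw [mul_comm g1 g2, Int.gcd_mul_left, Int.gcd_comm g3 g1, h13, mul_one]
      linear_combination (g1 * g3) * natAbs_sq_cast g2
    · rw [mul_comm g2 g3, mul_comm g1 g3, Int.gcd_mul_left, Int.gcd_comm g2 g1, h12,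
        mul_one]
      linear_combination (g1 * g2) * natAbs_sq_cast g3
  · -- InjOn
    rintro ⟨g1, g2, g3⟩ hg ⟨k1, k2, k3⟩ hk heq
    simp only [Set.mem_setOf_eq] at hg hk
    obtain ⟨s1, s2, s3, -, -, -, g12, g13, g23, n12, n13, n23⟩ := hg
    obtain ⟨t1, t2, t3, -, -, -, k12, k13, k23, m12, m13, m23⟩ := hk
    simp only [Prod.mk.injEq] at heq
    obtain ⟨e1, e2, e3⟩ := heq
    have hg1 := s1.ne_zero
    have hg2 := s2.ne_zero
    have hg3 := s3.ne_zero
    have hk1 := t1.ne_zero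
    have hk2 := t2.ne_zero
    have hk3 := t3.ne_zero
    have habs : g1.natAbs = k1.natAbs := by
      have h : Int.gcd (g1 * g3) (g1 * g2) = Int.gcd (k1 * k3) (k1 * k2) := by
        rw [e2, e3]
      rw [Int.gcd_mul_left, Int.gcd_mul_left, Int.gcd_comm g3 g2, g23,
        Int.gcd_comm k3 k2, k23] at h
      simpa using h
    rcases Int.natAbs_eq_natAbs_iff.mp habs with h1 | h1
    · subst h1
      have e2' : g3 = k3 := mul_left_cancel₀ hg1 e2
      have e3' : g2 = k2 := mul_left_cancel₀ hg1 e3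
      simp [e2', e3']
    · have e2' : (-g3) = k3 := mul_left_cancel₀ hk1
        (show k1 * (-g3) = k1 * k3 by linear_combination e2 - g3 * h1)
      have e3' : (-g2) = k2 := mul_left_cancel₀ hk1
        (show k1 * (-g2) = k1 * k2 by linear_combination e3 - g2 * h1)
      exfalso
      omega
  · -- SurjOn
    rintro ⟨D1, D2, D3⟩ hD
    simp only [Set.mem_setOf_eq] at hD
    obtain ⟨s1, s2, s3, h10, h11, h20, h21, h30, h31, e1, e2, e3⟩ := hD
    obtain ⟨a, hadef⟩ : ∃ a : ℤ, a = (Int.gcd D2 D3 : ℤ) := ⟨_, rfl⟩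
    obtain ⟨b, hbdef⟩ : ∃ b : ℤ, b = (Int.gcd D1 D3 : ℤ) := ⟨_, rfl⟩
    obtain ⟨c, hcdef⟩ : ∃ c : ℤ, c = (Int.gcd D1 D2 : ℤ) := ⟨_, rfl⟩
    rw [← hadef] at e1
    rw [← hbdef] at e2
    rw [← hcdef] at e3
    have ha : 0 < a := by
      rw [hadef]; exact_mod_cast Int.gcd_pos_of_ne_zero_left D3 h20
    have hb : 0 < b := by
      rw [hbdef]; exact_mod_cast Int.gcd_pos_of_ne_zero_left D3 h10
    have hc : 0 < c := by
      rw [hcdef]; exact_mod_cast Int.gcd_pos_of_ne_zero_left D2 h10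
    have sa : Squarefree a := by rw [hadef]; exact s2.squarefree_of_dvd (Int.gcd_dvd_left _ _)
    have sb : Squarefree b := by rw [hbdef]; exact s1.squarefree_of_dvd (Int.gcd_dvd_left _ _)
    have sc : Squarefree c := by rw [hcdef]; exact s1.squarefree_of_dvd (Int.gcd_dvd_left _ _)
    have k1 : (b * c) ^ 2 = D1 ^ 2 :=
      mul_left_cancel₀ (mul_ne_zero h20 h30)
        (by linear_combination (D3 * c ^ 2) * e2 + (D1 * D3) * e3)
    have k2 : (a * c) ^ 2 = D2 ^ 2 :=
      mul_left_cancel₀ (mul_ne_zero h10 h30)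
        (by linear_combination (D3 * c ^ 2) * e1 + (D2 * D3) * e3)
    have k3 : (a * b) ^ 2 = D3 ^ 2 :=
      mul_left_cancel₀ (mul_ne_zero h10 h20)
        (by linear_combination (D2 * b ^ 2) * e1 + (D2 * D3) * e2)
    have hbc : b * c = |D1| :=
      eq_of_sq_eq_sq' (by positivity) (abs_nonneg _) (by rw [sq_abs]; exact k1)
    have hac : a * c = |D2| :=
      eq_of_sq_eq_sq' (by positivity) (abs_nonneg _) (by rw [sq_abs]; exact k2)
    have hab : a * b = |D3| :=
      eq_of_sq_eq_sq' (by positivity) (abs_nonneg _) (by rw [sq_abs]; exact k3)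
    have sbc : Squarefree (b * c) := by
      rw [hbc]; exact s1.squarefree_of_dvd ((abs_dvd _ _).mpr dvd_rfl)
    have sac : Squarefree (a * c) := by
      rw [hac]; exact s2.squarefree_of_dvd ((abs_dvd _ _).mpr dvd_rfl)
    have sab : Squarefree (a * b) := by
      rw [hab]; exact s3.squarefree_of_dvd ((abs_dvd _ _).mpr dvd_rfl)
    have cbc : Int.gcd b c = 1 := gcd_one_of_sqf_mul sbc
    have cac : Int.gcd a c = 1 := gcd_one_of_sqf_mul sac
    have cab : Int.gcd a b = 1 := gcd_one_of_sqf_mul sab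
    rcases (abs_eq (by positivity : (0:ℤ) ≤ b * c)).mp hbc.symm with hD1 | hD1 <;>
      rcases (abs_eq (by positivity : (0:ℤ) ≤ a * c)).mp hac.symm with hD2 | hD2 <;>
        rcases (abs_eq (by positivity : (0:ℤ) ≤ a * b)).mp hab.symm with hD3 | hD3
    · -- all positive : g = (a, b, c)
      refine ⟨(a, b, c), ?_, ?_⟩
      · simp only [Set.mem_setOf_eq]
        refine ⟨sa, sb, sc, ?_, ?_, ?_, cab, cac, cbc, ?_, ?_, ?_⟩
        · intro h; obtain ⟨u, v⟩ := key_ne' ha cab h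
          exact h31 (by rw [hD3, u, v]; ring)
        · intro h; obtain ⟨u, v⟩ := key_ne' ha cac h
          exact h21 (by rw [hD2, u, v]; ring)
        · intro h; obtain ⟨u, v⟩ := key_ne' hb cbc h
          exact h11 (by rw [hD1, u, v]; ring)
        · omega
        · omega
        · omega
      · show ((b * c, a * c, a * b) : ℤ × ℤ × ℤ) = (D1, D2, D3)
        simp only [Prod.mk.injEq]
        exact ⟨hD1.symm, hD2.symm, hD3.symm⟩
    · -- D1 = bc, D2 = ac, D3 = -ab : impossible
      exfalso
      rw [hD1, hD2, hD3] at e1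
      nlinarith [mul_pos (mul_pos (mul_pos ha ha) hb) hc]
    · -- D1 = bc, D2 = -ac, D3 = ab : impossible
      exfalso
      rw [hD1, hD2, hD3] at e1
      nlinarith [mul_pos (mul_pos (mul_pos ha ha) hb) hc]
    · -- D1 = bc, D2 = -ac, D3 = -ab : g = (-a, b, c)
      refine ⟨(-a, b, c), ?_, ?_⟩
      · simp only [Set.mem_setOf_eq]
        refine ⟨sqf_neg' sa, sb, sc, ?_, ?_, ?_, ?_, ?_, cbc, ?_, ?_, ?_⟩
        · intro h; linarith
        · intro h; linarith
        · intro h; obtain ⟨u, v⟩ := key_ne' hb cbc h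
          exact h11 (by rw [hD1, u, v]; ring)
        · rw [gcd_neg_left']; exact cab
        · rw [gcd_neg_left']; exact cac
        · omega
        · omega
        · omega
      · show ((b * c, -a * c, -a * b) : ℤ × ℤ × ℤ) = (D1, D2, D3)
        simp only [Prod.mk.injEq]
        refine ⟨hD1.symm, by rw [hD2]; ring, by rw [hD3]; ring⟩
    · -- D1 = -bc, D2 = ac, D3 = ab : impossible
      exfalso
      rw [hD1, hD2, hD3] at e1
      nlinarith [mul_pos (mul_pos (mul_pos ha ha) hb) hc]
    · -- D1 = -bc, D2 = ac, D3 = -ab : g = (a, -b, c)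
      refine ⟨(a, -b, c), ?_, ?_⟩
      · simp only [Set.mem_setOf_eq]
        refine ⟨sa, sqf_neg' sb, sc, ?_, ?_, ?_, ?_, cac, ?_, ?_, ?_, ?_⟩
        · intro h; linarith
        · intro h; obtain ⟨u, v⟩ := key_ne' ha cac h
          exact h21 (by rw [hD2, u, v]; ring)
        · intro h; linarith
        · rw [gcd_neg_right']; exact cab
        · rw [gcd_neg_left']; exact cbc
        · omega
        · omega
        · omega
      · show ((-b * c, a * c, a * -b) : ℤ × ℤ × ℤ) = (D1, D2, D3)
        simp only [Prod.mk.injEq]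
        refine ⟨by rw [hD1]; ring, hD2.symm, by rw [hD3]; ring⟩
    · -- D1 = -bc, D2 = -ac, D3 = ab : g = (a, b, -c)
      refine ⟨(a, b, -c), ?_, ?_⟩
      · simp only [Set.mem_setOf_eq]
        refine ⟨sa, sb, sqf_neg' sc, ?_, ?_, ?_, cab, ?_, ?_, ?_, ?_, ?_⟩
        · intro h; obtain ⟨u, v⟩ := key_ne' ha cab h
          exact h31 (by rw [hD3, u, v]; ring)
        · intro h; linarith
        · intro h; linarith
        · rw [gcd_neg_right']; exact cac
        · rw [gcd_neg_right']; exact cbc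
        · omega
        · omega
        · omega
      · show ((b * -c, a * -c, a * b) : ℤ × ℤ × ℤ) = (D1, D2, D3)
        simp only [Prod.mk.injEq]
        refine ⟨by rw [hD1]; ring, by rw [hD2]; ring, hD3.symm⟩
    · -- all negative : impossible
      exfalso
      rw [hD1, hD2, hD3] at e1
      nlinarith [mul_pos (mul_pos (mul_pos ha ha) hb) hc]
end

section
/- Let K be a subfield of ℂ that is a number field of degree 4 over ℚ, and let x, y ∈ K and nonzero integers m, n with x² = m and y² = n (as elements of K). Then: (1) the sum over all four field embeddings σ : K → ℂ of σ(x)·conj(σ(x)) equals 4·|m|; and (2) if m·n is not the square of an integer, then the sum over all four field embeddings σ : K → ℂ of σ(x)·conj(σ(y)) equals 0. -/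
open Complex

lemma aux_mul_conj {z : ℂ} {a : ℤ} (hz : z ^ 2 = (a : ℂ)) :
    z * (starRingEnd ℂ) z = ((|a| : ℤ) : ℂ) := by
  have h1 : ‖z‖ ^ 2 = |(a : ℝ)| := by
    have h := norm_pow z 2
    rw [hz] at h
    rw [← h, Complex.norm_intCast]
  rw [Complex.mul_conj, ← Complex.sq_norm, h1]
  norm_cast

lemma aux_rat_sq {r : ℚ} {a : ℤ} (h : r ^ 2 = (a : ℚ)) : ∃ k : ℤ, a = k ^ 2 := by
  have hR : (r : ℝ) ^ 2 = (a : ℝ) := by exact_mod_cast congrArg (Rat.cast : ℚ → ℝ) h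
  by_contra hk
  have : ¬∃ y : ℤ, (r : ℝ) = y := by
    rintro ⟨y, hy⟩
    apply hk
    refine ⟨y, ?_⟩
    have : ((y : ℝ)) ^ 2 = (a : ℝ) := by rw [← hy]; exact hR
    exact_mod_cast this.symm
  exact (Rat.not_irrational r) (irrational_nrt_of_notint_nrt 2 a hR this two_pos)

/-- Let `K ⊆ ℂ` be a number field of degree 4 over `ℚ`, and `x, y ∈ K`
with `x² = m`, `y² = n` for nonzero integers `m, n`. Then (1)
`∑_σ σ(x)·conj(σ(x)) = 4|m|`, the sum over the four embeddings `σ : K → ℂ`; and (2) if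
`m·n` is not the square of an integer, then `∑_σ σ(x)·conj(σ(y)) = 0`. -/
theorem stmt18 (K : IntermediateField ℚ ℂ) [FiniteDimensional ℚ K]
    (hdeg : Module.finrank ℚ K = 4) (x y : K) (m n : ℤ) (hm : m ≠ 0) (hn : n ≠ 0)
    (hx : x ^ 2 = (m : K)) (hy : y ^ 2 = (n : K)) :
    (∑ σ : K →ₐ[ℚ] ℂ, σ x * (starRingEnd ℂ) (σ x)) = ((4 * |m| : ℤ) : ℂ) ∧
    (¬(∃ k : ℤ, m * n = k ^ 2) →
      (∑ σ : K →ₐ[ℚ] ℂ, σ x * (starRingEnd ℂ) (σ y)) = 0) := by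
  have hcard : Fintype.card (K →ₐ[ℚ] ℂ) = 4 := by
    rw [AlgHom.card]; exact hdeg
  have hσx : ∀ σ : K →ₐ[ℚ] ℂ, (σ x) ^ 2 = (m : ℂ) := by
    intro σ; rw [← map_pow, hx, map_intCast]
  have hσy : ∀ σ : K →ₐ[ℚ] ℂ, (σ y) ^ 2 = (n : ℂ) := by
    intro σ; rw [← map_pow, hy, map_intCast]
  constructor
  · rw [Finset.sum_congr rfl (fun σ _ => aux_mul_conj (hσx σ)), Finset.sum_const,
      Finset.card_univ, hcard]
    push_cast
    ring
  · intro hsq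
    have hnC : (n : ℂ) ≠ 0 := Int.cast_ne_zero.mpr hn
    have hconj : ∀ σ : K →ₐ[ℚ] ℂ, (starRingEnd ℂ) (σ y) = ((|n| : ℤ) : ℂ) / (n : ℂ) * σ y := by
      intro σ
      have hy0 : σ y ≠ 0 := by
        intro h; apply hnC; rw [← hσy σ, h]; ring
      have h1 : σ y * (starRingEnd ℂ) (σ y) = ((|n| : ℤ) : ℂ) := aux_mul_conj (hσy σ)
      field_simp
      calc (starRingEnd ℂ) (σ y) * (n : ℂ) = (starRingEnd ℂ) (σ y) * (σ y * σ y) := by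
            rw [← hσy σ]; ring
        _ = ((|n| : ℤ) : ℂ) * σ y := by rw [← mul_assoc, mul_comm ((starRingEnd ℂ) (σ y)) (σ y), h1]
    have hS : (∑ σ : K →ₐ[ℚ] ℂ, σ x * (starRingEnd ℂ) (σ y))
        = ((|n| : ℤ) : ℂ) / (n : ℂ) * ∑ σ : K →ₐ[ℚ] ℂ, σ (x * y) := by
      rw [Finset.mul_sum]
      refine Finset.sum_congr rfl fun σ _ => ?_
      rw [hconj σ, map_mul]; ring
    rw [hS]
    have hT : ∑ σ : K →ₐ[ℚ] ℂ, σ (x * y) = algebraMap ℚ ℂ (Algebra.trace ℚ K (x * y)) :=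
      (trace_eq_sum_embeddings ℂ).symm
    set q : ℚ := Algebra.trace ℚ K (x * y) with hq
    have hsq2 : ∀ σ : K →ₐ[ℚ] ℂ, (σ (x * y)) ^ 2 = ((m * n : ℤ) : ℂ) := by
      intro σ
      push_cast
      rw [map_mul, mul_pow, hσx σ, hσy σ]
    obtain ⟨s, hs⟩ : ∃ s : ℂ, s ^ 2 = ((m * n : ℤ) : ℂ) :=
      IsAlgClosed.exists_pow_nat_eq _ two_pos
    have hs0 : s ≠ 0 := by
      intro h
      rw [h] at hs
      simp only [ne_eq, zero_pow, OfNat.ofNat_ne_zero, not_false_eq_true] at hs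
      exact (mul_ne_zero hm hn) (by exact_mod_cast hs.symm)
    have hpm : ∀ σ : K →ₐ[ℚ] ℂ, σ (x * y) = s ∨ σ (x * y) = -s := by
      intro σ
      have h0 : (σ (x * y) - s) * (σ (x * y) + s) = 0 := by
        have h := hsq2 σ
        rw [← hs] at h
        linear_combination h
      rcases mul_eq_zero.mp h0 with h | h
      · left; linear_combination h
      · right; linear_combination h
    -- write each term as ε * s
    classical
    set ε : (K →ₐ[ℚ] ℂ) → ℤ := fun σ => if σ (x * y) = s then 1 else -1 with hε
    have hterm : ∀ σ : K →ₐ[ℚ] ℂ, σ (x * y) = (ε σ : ℂ) * s := by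
      intro σ
      rcases hpm σ with h | h
      · rw [hε]; simp only; rw [if_pos h, h]; push_cast; ring
      · have hne : σ (x * y) ≠ s := by
          rw [h]; intro h2
          apply hs0
          have : (2 : ℂ) * s = 0 := by linear_combination -h2
          simpa using (mul_eq_zero.mp this).resolve_left (by norm_num)
        rw [hε]; simp only; rw [if_neg hne, h]; push_cast; ring
    have hsum : ∑ σ : K →ₐ[ℚ] ℂ, σ (x * y)
        = ((∑ σ : K →ₐ[ℚ] ℂ, ε σ : ℤ) : ℂ) * s := by
      push_cast
      rw [Finset.sum_mul]
      exact Finset.sum_congr rfl fun σ _ => hterm σ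
    set k : ℤ := ∑ σ : K →ₐ[ℚ] ℂ, ε σ with hk
    have hQC : ((q : ℂ)) = (k : ℂ) * s := by
      rw [show ((q : ℂ)) = algebraMap ℚ ℂ q from (eq_ratCast (algebraMap ℚ ℂ) q).symm, ← hT]
      exact hsum
    -- trace must be zero
    have hq0 : q = 0 := by
      by_contra hq0
      have hk0 : k ≠ 0 := by
        intro h
        rw [h] at hQC
        simp only [Int.cast_zero, zero_mul, Rat.cast_eq_zero] at hQC
        exact hq0 hQC
      have hkQ : (k : ℚ) ≠ 0 := Int.cast_ne_zero.mpr hk0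
      have h2 : q ^ 2 = (k : ℚ) ^ 2 * ((m * n : ℤ) : ℚ) := by
        have h2C : ((q : ℂ)) ^ 2 = ((k : ℂ)) ^ 2 * ((m * n : ℤ) : ℂ) := by
          rw [hQC, ← hs]; ring
        exact_mod_cast h2C
      have h3 : (q / (k : ℚ)) ^ 2 = ((m * n : ℤ) : ℚ) := by
        field_simp
        push_cast at h2 ⊢
        linear_combination h2
      exact hsq (aux_rat_sq h3)
    rw [hT, hq0, map_zero, mul_zero]
end

section
/- Let a, c be real numbers with 0 < c ≤ √2·a, and let L ⊆ ℝ³ be the additive subgroup (ℤ-span) generated by w₁ = (c, 0, 0), w₂ = (0, a, 0), w₃ = (0, 0, a), and w₄ = (c/2, a/2, a/2). Define v₀ = (c/2, a/2, a/2), v₁ = (−c/2, −a/2, a/2), v₂ = (c/2, −a/2, −a/2), v₃ = (−c/2, a/2, −a/2). Then v₀ + v₁ + v₂ + v₃ = 0, the triple (v₁, v₂, v₃) is a ℤ-basis of L (i.e. L is the ℤ-span of v₁, v₂, v₃ and they are ℤ-linearly independent), and vᵢ · vⱼ ≤ 0 for all i ≠ j, where · is the standard inner product on ℝ³. In other words,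 (v₀, v₁, v₂, v₃) is an obtuse superbase of the body-centered tetragonal lattice L. -/
/-- The vectors `v₀ = (c/2, a/2, a/2)`, `v₁ = (−c/2, −a/2, a/2)`,
`v₂ = (c/2, −a/2, −a/2)`, `v₃ = (−c/2, a/2, −a/2)`. -/
noncomputable def tIvec (a c : ℝ) : Fin 4 → Fin 3 → ℝ :=
  ![![c / 2, a / 2, a / 2], ![-c / 2, -a / 2, a / 2],
    ![c / 2, -a / 2, -a / 2], ![-c / 2, a / 2, -a / 2]]

/-- For `0 < c ≤ √2·a` and `L ⊆ ℝ³` the ℤ-span of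
`w₁ = (c,0,0)`, `w₂ = (0,a,0)`, `w₃ = (0,0,a)`, `w₄ = (c/2, a/2, a/2)`, the quadruple
`(v₀, v₁, v₂, v₃)` above is an obtuse superbase of the body-centered tetragonal lattice
`L`: `v₀ + v₁ + v₂ + v₃ = 0`, `(v₁, v₂, v₃)` is a ℤ-basis of `L`, and `vᵢ · vⱼ ≤ 0`
for all `i ≠ j`. -/
theorem stmt19 (a c : ℝ) (hc : 0 < c) (hca : c ≤ Real.sqrt 2 * a) :
    (tIvec a c 0 + tIvec a c 1 + tIvec a c 2 + tIvec a c 3 = 0) ∧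
    (Submodule.span ℤ {tIvec a c 1, tIvec a c 2, tIvec a c 3} =
      Submodule.span ℤ
        {![c, 0, 0], ![0, a, 0], ![0, 0, a], ![c / 2, a / 2, a / 2]}) ∧
    LinearIndependent ℤ ![tIvec a c 1, tIvec a c 2, tIvec a c 3] ∧
    (∀ i j : Fin 4, i ≠ j → ∑ k : Fin 3, tIvec a c i k * tIvec a c j k ≤ 0) := by
  have ha : 0 < a := by
    by_contra h
    push_neg at h
    have : Real.sqrt 2 * a ≤ 0 :=
      mul_nonpos_of_nonneg_of_nonpos (Real.sqrt_nonneg 2) h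
    linarith
  have hc2 : c ^ 2 ≤ 2 * a ^ 2 := by
    have := mul_self_le_mul_self hc.le hca
    have h2 : Real.sqrt 2 * Real.sqrt 2 = 2 := Real.mul_self_sqrt (by norm_num)
    nlinarith
  refine ⟨?_, ?_, ?_, ?_⟩
  · funext i
    fin_cases i <;> simp [tIvec, Matrix.vecHead, Matrix.vecTail] <;> ring
  · apply le_antisymm <;> rw [Submodule.span_le] <;> intro x hx
    · simp only [Set.mem_insert_iff, Set.mem_singleton_iff] at hx
      have m1 : (![c, 0, 0] : Fin 3 → ℝ) ∈ Submodule.span ℤ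
          {![c, 0, 0], ![0, a, 0], ![0, 0, a], ![c / 2, a / 2, a / 2]} :=
        Submodule.subset_span (by simp)
      have m2 : (![0, a, 0] : Fin 3 → ℝ) ∈ Submodule.span ℤ
          {![c, 0, 0], ![0, a, 0], ![0, 0, a], ![c / 2, a / 2, a / 2]} :=
        Submodule.subset_span (by simp)
      have m3 : (![0, 0, a] : Fin 3 → ℝ) ∈ Submodule.span ℤ
          {![c, 0, 0], ![0, a, 0], ![0, 0, a], ![c / 2, a / 2, a / 2]} :=
        Submodule.subset_span (by simp)
      have m4 : (![c / 2, a / 2, a / 2] : Fin 3 → ℝ) ∈ Submodule.span ℤ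
          {![c, 0, 0], ![0, a, 0], ![0, 0, a], ![c / 2, a / 2, a / 2]} :=
        Submodule.subset_span (by simp)
      rcases hx with h | h | h
      · have : x = ![c / 2, a / 2, a / 2] - ![c, 0, 0] - ![0, a, 0] := by
          rw [h]; funext i; fin_cases i <;> simp [tIvec, Matrix.vecHead, Matrix.vecTail] <;> ring
        rw [this]; exact sub_mem (sub_mem m4 m1) m2
      · have : x = ![c / 2, a / 2, a / 2] - ![0, a, 0] - ![0, 0, a] := by
          rw [h]; funext i; fin_cases i <;> simp [tIvec, Matrix.vecHead, Matrix.vecTail] <;> ring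
        rw [this]; exact sub_mem (sub_mem m4 m2) m3
      · have : x = ![c / 2, a / 2, a / 2] - ![c, 0, 0] - ![0, 0, a] := by
          rw [h]; funext i; fin_cases i <;> simp [tIvec, Matrix.vecHead, Matrix.vecTail] <;> ring
        rw [this]; exact sub_mem (sub_mem m4 m1) m3
    · simp only [Set.mem_insert_iff, Set.mem_singleton_iff] at hx
      have m1 : tIvec a c 1 ∈ Submodule.span ℤ
          {tIvec a c 1, tIvec a c 2, tIvec a c 3} := Submodule.subset_span (by simp)
      have m2 : tIvec a c 2 ∈ Submodule.span ℤ
          {tIvec a c 1, tIvec a c 2, tIvec a c 3} := Submodule.subset_span (by simp)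
      have m3 : tIvec a c 3 ∈ Submodule.span ℤ
          {tIvec a c 1, tIvec a c 2, tIvec a c 3} := Submodule.subset_span (by simp)
      rcases hx with h | h | h | h
      · have : x = -(tIvec a c 1) - tIvec a c 3 := by
          rw [h]; funext i; fin_cases i <;> simp [tIvec, Matrix.vecHead, Matrix.vecTail] <;> ring
        rw [this]; exact sub_mem (neg_mem m1) m3
      · have : x = -(tIvec a c 1) - tIvec a c 2 := by
          rw [h]; funext i; fin_cases i <;> simp [tIvec, Matrix.vecHead, Matrix.vecTail] <;> ring
        rw [this]; exact sub_mem (neg_mem m1) m2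
      · have : x = -(tIvec a c 2) - tIvec a c 3 := by
          rw [h]; funext i; fin_cases i <;> simp [tIvec, Matrix.vecHead, Matrix.vecTail] <;> ring
        rw [this]; exact sub_mem (neg_mem m2) m3
      · have : x = -(tIvec a c 1) - tIvec a c 2 - tIvec a c 3 := by
          rw [h]; funext i; fin_cases i <;> simp [tIvec, Matrix.vecHead, Matrix.vecTail] <;> ring
        rw [this]; exact sub_mem (sub_mem (neg_mem m1) m2) m3
  · have hR : LinearIndependent ℝ ![tIvec a c 1, tIvec a c 2, tIvec a c 3] := by
      have : ![tIvec a c 1, tIvec a c 2, tIvec a c 3] =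
          (Matrix.of ![tIvec a c 1, tIvec a c 2, tIvec a c 3]).row := rfl
      rw [this, Matrix.linearIndependent_rows_iff_isUnit,
        Matrix.isUnit_iff_isUnit_det]
      have : (Matrix.of ![tIvec a c 1, tIvec a c 2, tIvec a c 3]).det
          = -(a ^ 2 * c / 2) := by
        simp [Matrix.det_fin_three, tIvec, Matrix.vecHead, Matrix.vecTail]
        ring
      rw [isUnit_iff_ne_zero, this, ne_eq, neg_eq_zero]
      positivity
    exact hR.restrict_scalars (by
      intro x y h
      simpa using h)
  · intro i j hij
    fin_cases i <;> fin_cases j <;> simp_all [tIvec, Fin.sum_univ_three] <;> nlinarith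
end
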